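/- Let (Ω, ℱ, P) be a probability space, G and Ĝ real random variables, q and q̂ real numbers, and Δ₁, Δ₂ ≥ 0 with |Ĝ − G| ≤ Δ₁ almost surely and |q̂ − q| ≤ Δ₂. Suppose the margin condition holds at q: there exist C > 0 and α > 0 such that P(|G − q| ≤ t) ≤ C·t^α for all t > 0. Then E[ |G − q| · |𝟙{Ĝ > q̂} − 𝟙{G > q}| ] ≤ C·(Δ₁ + Δ₂)^{1+α}. -/
import Mathlib


open MeasureTheory

/-- Under the margin condition at `q` with exponent `α`, if `|Ĝ − G| ≤ Δ₁` a.s. and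
`|q̂ − q| ≤ Δ₂`, then `E[|G − q|·|𝟙{Ĝ > q̂} − 𝟙{G > q}|] ≤ C·(Δ₁ + Δ₂)^{1+α}`. -/
theorem margin_condition_indicator_error_bound
    {Ω : Type*} [MeasurableSpace Ω] (P : Measure Ω) [IsProbabilityMeasure P]
    (G Ghat : Ω → ℝ) (q qhat : ℝ)
    (Δ₁ Δ₂ : ℝ) (hΔ₁ : 0 ≤ Δ₁) (hΔ₂ : 0 ≤ Δ₂)
    (hGG : ∀ᵐ ω ∂P, |Ghat ω - G ω| ≤ Δ₁) (hqq : |qhat - q| ≤ Δ₂)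
    (C α : ℝ) (hC : 0 < C) (hα : 0 < α)
    (hmargin : ∀ t > (0 : ℝ), (P {ω | |G ω - q| ≤ t}).toReal ≤ C * t ^ α) :
    ∫ ω, |G ω - q| *
        |(if Ghat ω > qhat then (1 : ℝ) else 0) - (if G ω > q then (1 : ℝ) else 0)| ∂P ≤
      C * (Δ₁ + Δ₂) ^ (1 + α) := by
  set Δ : ℝ := Δ₁ + Δ₂ with hΔdef
  have hΔ : 0 ≤ Δ := add_nonneg hΔ₁ hΔ₂
  set f : Ω → ℝ := fun ω => |G ω - q| *
      |(if Ghat ω > qhat then (1 : ℝ) else 0) - (if G ω > q then (1 : ℝ) else 0)| with hf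
  have hfnn : ∀ ω, 0 ≤ f ω := fun ω => mul_nonneg (abs_nonneg _) (abs_nonneg _)
  have hq1 : qhat - q ≤ Δ₂ := (abs_le.mp hqq).2
  have hq2 : q - qhat ≤ Δ₂ := by have := (abs_le.mp hqq).1; linarith
  have hbound : ∀ᵐ ω ∂P,
      f ω ≤ Δ * Set.indicator {ω | |G ω - q| ≤ Δ} (fun _ => (1 : ℝ)) ω := by
    filter_upwards [hGG] with ω hω
    have h1 : Ghat ω - G ω ≤ Δ₁ := (abs_le.mp hω).2
    have h2 : G ω - Ghat ω ≤ Δ₁ := by have := (abs_le.mp hω).1; linarith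
    by_cases hind : (if Ghat ω > qhat then (1 : ℝ) else 0) = (if G ω > q then (1 : ℝ) else 0)
    · have : f ω = 0 := by simp [hf, hind]
      rw [this]
      exact mul_nonneg hΔ (Set.indicator_nonneg (fun _ _ => zero_le_one) ω)
    · have hS : |G ω - q| ≤ Δ := by
        by_cases ha : Ghat ω > qhat <;> by_cases hb : G ω > q
        · simp [ha, hb] at hind
        · push_neg at hb
          exact abs_le.mpr ⟨by linarith, by linarith⟩
        · push_neg at ha
          exact abs_le.mpr ⟨by linarith, by linarith⟩
        · simp [ha, hb] at hind
      have hmem : ω ∈ {ω | |G ω - q| ≤ Δ} := hS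
      rw [Set.indicator_of_mem hmem, mul_one]
      have habs : |(if Ghat ω > qhat then (1 : ℝ) else 0) - (if G ω > q then (1 : ℝ) else 0)| ≤ 1 := by
        by_cases ha : Ghat ω > qhat <;> by_cases hb : G ω > q <;> simp [ha, hb]
      calc f ω ≤ |G ω - q| * 1 :=
            mul_le_mul_of_nonneg_left habs (abs_nonneg _)
        _ = |G ω - q| := mul_one _
        _ ≤ Δ := hS
  have hRHSnn : 0 ≤ C * Δ ^ (1 + α) := mul_nonneg hC.le (Real.rpow_nonneg hΔ _)
  by_cases hint : Integrable f P
  · by_cases hΔ0 : Δ = 0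
    · have hzero : f =ᵐ[P] fun _ => (0 : ℝ) := by
        filter_upwards [hbound] with ω hω
        have : f ω ≤ 0 := by
          calc f ω ≤ Δ * _ := hω
            _ = 0 := by rw [hΔ0, zero_mul]
        exact le_antisymm this (hfnn ω)
      calc ∫ ω, f ω ∂P = 0 := by rw [integral_congr_ae hzero, integral_zero]
        _ ≤ C * Δ ^ (1 + α) := hRHSnn
    · have hΔpos : 0 < Δ := lt_of_le_of_ne hΔ (Ne.symm hΔ0)
      set S : Set Ω := {ω | |G ω - q| ≤ Δ} with hSdef
      rw [integral_eq_lintegral_of_nonneg_ae (ae_of_all _ hfnn) hint.aestronglyMeasurable]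
      have hl : ∫⁻ ω, ENNReal.ofReal (f ω) ∂P ≤ ENNReal.ofReal Δ * P S := by
        refine le_trans (lintegral_mono_ae ?_) (lintegral_indicator_const_le S (ENNReal.ofReal Δ))
        filter_upwards [hbound] with ω hω
        by_cases hmem : ω ∈ S
        · rw [Set.indicator_of_mem hmem]
          refine ENNReal.ofReal_le_ofReal ?_
          calc f ω ≤ Δ * Set.indicator S (fun _ => (1 : ℝ)) ω := hω
            _ = Δ := by rw [Set.indicator_of_mem hmem, mul_one]
        · rw [Set.indicator_of_notMem hmem]
          have hle : f ω ≤ 0 := by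
            calc f ω ≤ Δ * Set.indicator S (fun _ => (1 : ℝ)) ω := hω
              _ = 0 := by rw [Set.indicator_of_notMem hmem, mul_zero]
          simp [ENNReal.ofReal_eq_zero.mpr hle]
      have hfin : ENNReal.ofReal Δ * P S ≠ ⊤ :=
        ENNReal.mul_ne_top ENNReal.ofReal_ne_top (measure_ne_top _ _)
      have hPS : (P S).toReal ≤ C * Δ ^ α := hmargin Δ hΔpos
      calc (∫⁻ ω, ENNReal.ofReal (f ω) ∂P).toReal
          ≤ (ENNReal.ofReal Δ * P S).toReal := ENNReal.toReal_mono hfin hl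
        _ = Δ * (P S).toReal := by rw [ENNReal.toReal_mul, ENNReal.toReal_ofReal hΔ]
        _ ≤ Δ * (C * Δ ^ α) := mul_le_mul_of_nonneg_left hPS hΔ
        _ = C * Δ ^ (1 + α) := by
            rw [Real.rpow_add hΔpos, Real.rpow_one]; ring
  · rw [integral_undef hint]
    exact hRHSnn
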